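/- arXiv:1707.02719 — 4 statements merged into one kernel-verified Lean document; each statement's English description precedes it below -/
import Mathlib

section
/- Let T > 0, let f : ℝ → ℂ be measurable with ‖f‖_{D(T)} < ∞, and let G : ℝ × [0,T] → ℂ be measurable with ‖G‖_{N₊(T)} < ∞, and suppose the function u(x,t) = f(x−t) + i ∫₀^t G(x−t+s, s) ds is well defined. Then: (a) for every t ∈ [0,T], ‖u(·,t)‖_{D(T)} ≤ ‖f‖_{D(T)} + ‖G‖_{N₊(T)}; (b) ‖u‖_{X₊(T)} ≤ ‖f‖_{D(T)} + ‖G‖_{N₊(T)}; (c) the function p(y) = |f(y)| + ∫₀^T |G(y+s,s)| ds satisfies |u(x,t)| ≤ p(x−t) for all (x,t) ∈ ℝ × [0,T] and ‖p‖_{D(T)} ≤ ‖f‖_{D(T)} + ‖G‖_{N₊(T)}. In particular the sum of the three quantities in (a), (b), (c) is at most 3‖f‖_{D(T)} + 3‖G‖_{N₊(T)}. -/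
open MeasureTheory Set

/-- The `D(T)` norm: `‖f‖_{D(T)} = sup_{x ∈ ℝ} (∫₀^T |f(x+2s)|² ds)^{1/2}`,
for a nonnegative (extended-real-valued) density `g`. -/
noncomputable def DnormE (T : ℝ) (g : ℝ → ENNReal) : ENNReal :=
  ⨆ x : ℝ, (∫⁻ s in Set.Ioc (0:ℝ) T, (g (x + 2*s))^2) ^ (1/2 : ℝ)

/-- The `D(T)` norm of a complex-valued function. -/
noncomputable def Dnorm (T : ℝ) (f : ℝ → ℂ) : ENNReal :=
  DnormE T (fun y => (‖f y‖₊ : ENNReal))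

/-- `‖u‖_{X₊(T)} = sup_{x ∈ ℝ} (∫₀^T |u(x−t,t)|² dt)^{1/2}`. -/
noncomputable def Xplus (T : ℝ) (u : ℝ → ℝ → ℂ) : ENNReal :=
  ⨆ x : ℝ, (∫⁻ t in Set.Ioc (0:ℝ) T, (‖u (x - t) t‖₊ : ENNReal)^2) ^ (1/2 : ℝ)

/-- `‖F‖_{N₊(T)}`: the `D(T)` norm of `y ↦ ∫₀^T |F(y+s,s)| ds`. -/
noncomputable def Nplus (T : ℝ) (F : ℝ → ℝ → ℂ) : ENNReal :=
  DnormE T (fun y => ∫⁻ s in Set.Ioc (0:ℝ) T, (‖F (y + s) s‖₊ : ENNReal))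


private lemma refl_lint (T : ℝ) (h : ℝ → ENNReal) (hm : Measurable h) :
    ∫⁻ t in Set.Ioc (0:ℝ) T, h (T - t) = ∫⁻ t in Set.Ioc (0:ℝ) T, h t := by
  have hp : (fun t : ℝ => T - t) ⁻¹' Set.Ioc 0 T = Set.Ico 0 T := by
    ext t; simp only [mem_preimage, mem_Ioc, mem_Ico, sub_pos]
    constructor <;> intro h <;> exact ⟨by linarith [h.1, h.2], by linarith [h.1, h.2]⟩
  have := (Measure.measurePreserving_sub_left volume T).setLIntegral_comp_preimage_emb
    (MeasurableEquiv.subLeft T).measurableEmbedding h (Set.Ioc 0 T)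
  rw [hp] at this
  rw [← this, setLIntegral_congr (Ico_ae_eq_Ioc (μ := volume))]

private lemma DnormE_add_le (T : ℝ) (a b : ℝ → ENNReal) (ha : Measurable a)
    (hb : Measurable b) :
    DnormE T (fun y => a y + b y) ≤ DnormE T a + DnormE T b := by
  refine iSup_le fun x => ?_
  have key : (∫⁻ s in Set.Ioc (0:ℝ) T, (a (x + 2*s) + b (x + 2*s)) ^ (2:ℝ)) ^ (1/2 : ℝ)
      ≤ (∫⁻ s in Set.Ioc (0:ℝ) T, a (x + 2*s) ^ (2:ℝ)) ^ (1/2 : ℝ)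
        + (∫⁻ s in Set.Ioc (0:ℝ) T, b (x + 2*s) ^ (2:ℝ)) ^ (1/2 : ℝ) := by
    have hma : AEMeasurable (fun s : ℝ => a (x + 2*s))
        (volume.restrict (Set.Ioc (0:ℝ) T)) :=
      (ha.comp (measurable_const.add (measurable_id.const_mul 2))).aemeasurable
    have hmb : AEMeasurable (fun s : ℝ => b (x + 2*s))
        (volume.restrict (Set.Ioc (0:ℝ) T)) :=
      (hb.comp (measurable_const.add (measurable_id.const_mul 2))).aemeasurable
    have := ENNReal.lintegral_Lp_add_le hma hmb (by norm_num : (1:ℝ) ≤ 2)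
    simpa using this
  have h2 : ∀ z : ENNReal, z ^ (2:ℝ) = z ^ (2:ℕ) := fun z => by
    rw [← ENNReal.rpow_natCast z 2]; norm_num
  simp only [h2] at key
  calc (∫⁻ s in Set.Ioc (0:ℝ) T, (a (x + 2*s) + b (x + 2*s)) ^ (2:ℕ)) ^ (1/2 : ℝ)
      ≤ (∫⁻ s in Set.Ioc (0:ℝ) T, a (x + 2*s) ^ (2:ℕ)) ^ (1/2 : ℝ)
        + (∫⁻ s in Set.Ioc (0:ℝ) T, b (x + 2*s) ^ (2:ℕ)) ^ (1/2 : ℝ) := key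
    _ ≤ DnormE T a + DnormE T b :=
        add_le_add (le_iSup (fun x => (∫⁻ s in Set.Ioc (0:ℝ) T, a (x + 2*s) ^ (2:ℕ)) ^ (1/2:ℝ)) x)
          (le_iSup (fun x => (∫⁻ s in Set.Ioc (0:ℝ) T, b (x + 2*s) ^ (2:ℕ)) ^ (1/2:ℝ)) x)

private noncomputable def gdef (T : ℝ) (f : ℝ → ℂ) (G : ℝ → ℝ → ℂ) : ℝ → ENNReal :=
  fun y => (‖f y‖₊ : ENNReal) + ∫⁻ s in Set.Ioc (0:ℝ) T, (‖G (y + s) s‖₊ : ENNReal)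


/-- Key linear estimates for the solution `u(x,t) = f(x−t) + i ∫₀^t G(x−t+s,s) ds` of
`(∂_t + ∂_x)u = iG`, `u(x,0) = f(x)`:
(a) `‖u(·,t)‖_{D(T)} ≤ ‖f‖_{D(T)} + ‖G‖_{N₊(T)}` for every `t ∈ [0,T]`;
(b) `‖u‖_{X₊(T)} ≤ ‖f‖_{D(T)} + ‖G‖_{N₊(T)}`;
(c) `p(y) = |f(y)| + ∫₀^T |G(y+s,s)| ds` majorizes `u` along left-moving characteristics,
    i.e. `|u(x,t)| ≤ p(x−t)`, and `‖p‖_{D(T)} ≤ ‖f‖_{D(T)} + ‖G‖_{N₊(T)}`.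
In particular the sum of the three quantities is at most `3‖f‖_{D(T)} + 3‖G‖_{N₊(T)}`. -/
theorem linear_estimates (T : ℝ) (hT : 0 < T) (f : ℝ → ℂ) (G : ℝ → ℝ → ℂ)
    (hfm : Measurable f) (hGm : Measurable (Function.uncurry G))
    (hfD : Dnorm T f < ⊤) (hGN : Nplus T G < ⊤)
    (hwd : ∀ x : ℝ, ∀ t ∈ Set.Icc (0:ℝ) T,
      IntegrableOn (fun s => G (x - t + s) s) (Set.Ioc (0:ℝ) t))
    (u : ℝ → ℝ → ℂ)
    (hu : ∀ x t, u x t = f (x - t) + Complex.I * ∫ s in Set.Ioc (0:ℝ) t, G (x - t + s) s) :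
    (∀ t ∈ Set.Icc (0:ℝ) T, Dnorm T (fun x => u x t) ≤ Dnorm T f + Nplus T G) ∧
    Xplus T u ≤ Dnorm T f + Nplus T G ∧
    (∀ x : ℝ, ∀ t ∈ Set.Icc (0:ℝ) T,
      (‖u x t‖₊ : ENNReal)
        ≤ (‖f (x - t)‖₊ : ENNReal) + ∫⁻ s in Set.Ioc (0:ℝ) T, (‖G (x - t + s) s‖₊ : ENNReal)) ∧
    DnormE T (fun y => (‖f y‖₊ : ENNReal) + ∫⁻ s in Set.Ioc (0:ℝ) T, (‖G (y + s) s‖₊ : ENNReal))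
      ≤ Dnorm T f + Nplus T G ∧
    (∀ t ∈ Set.Icc (0:ℝ) T,
      Dnorm T (fun x => u x t) + Xplus T u +
        DnormE T (fun y => (‖f y‖₊ : ENNReal)
          + ∫⁻ s in Set.Ioc (0:ℝ) T, (‖G (y + s) s‖₊ : ENNReal))
        ≤ 3 * Dnorm T f + 3 * Nplus T G) := by
  have hφm : Measurable (fun y : ℝ => ∫⁻ s in Set.Ioc (0:ℝ) T, (‖G (y + s) s‖₊ : ENNReal)) := by
    exact Measurable.lintegral_prod_right'
      (f := fun p : ℝ × ℝ => (‖G (p.1 + p.2) p.2‖₊ : ENNReal))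
      ((hGm.comp ((measurable_fst.add measurable_snd).prodMk measurable_snd)).nnnorm.coe_nnreal_ennreal)
  have hgm : Measurable (gdef T f G) := hfm.nnnorm.coe_nnreal_ennreal.add hφm
  -- the pointwise majorization
  have key : ∀ x : ℝ, ∀ t ∈ Set.Icc (0:ℝ) T,
      (‖u x t‖₊ : ENNReal) ≤ gdef T f G (x - t) := by
    intro x t ht
    rw [hu x t]
    have h1 : (‖f (x - t) + Complex.I * ∫ s in Set.Ioc (0:ℝ) t, G (x - t + s) s‖₊ : ENNReal)
        ≤ (‖f (x - t)‖₊ : ENNReal)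
          + (‖Complex.I * ∫ s in Set.Ioc (0:ℝ) t, G (x - t + s) s‖₊ : ENNReal) := by
      exact_mod_cast nnnorm_add_le _ _
    refine h1.trans (add_le_add le_rfl ?_)
    have h2 : (‖Complex.I * ∫ s in Set.Ioc (0:ℝ) t, G (x - t + s) s‖₊ : ENNReal)
        = (‖∫ s in Set.Ioc (0:ℝ) t, G (x - t + s) s‖₊ : ENNReal) := by
      simp [nnnorm_mul]
    rw [h2]
    refine le_trans (enorm_integral_le_lintegral_enorm _) ?_
    exact lintegral_mono_set (Set.Ioc_subset_Ioc_right ht.2)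
  have keyD : DnormE T (gdef T f G) ≤ Dnorm T f + Nplus T G :=
    DnormE_add_le T _ _ hfm.nnnorm.coe_nnreal_ennreal hφm
  -- (a)
  have ha : ∀ t ∈ Set.Icc (0:ℝ) T, Dnorm T (fun x => u x t) ≤ Dnorm T f + Nplus T G := by
    intro t ht
    refine le_trans ?_ keyD
    refine iSup_le fun x => ?_
    refine le_trans ?_
      (le_iSup (fun x => (∫⁻ s in Set.Ioc (0:ℝ) T, gdef T f G (x + 2*s) ^ 2) ^ (1/2:ℝ)) (x - t))
    refine ENNReal.rpow_le_rpow ?_ (by norm_num)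
    refine lintegral_mono fun s => ?_
    have h := key (x + 2*s) t ht
    have hxy : x + 2*s - t = x - t + 2*s := by ring
    rw [hxy] at h
    exact pow_le_pow_left' h 2
  -- (b)
  have hb : Xplus T u ≤ Dnorm T f + Nplus T G := by
    refine le_trans ?_ keyD
    refine iSup_le fun x => ?_
    have step1 : ∫⁻ t in Set.Ioc (0:ℝ) T, (‖u (x - t) t‖₊ : ENNReal) ^ 2
        ≤ ∫⁻ t in Set.Ioc (0:ℝ) T, gdef T f G (x - 2*t) ^ 2 := by
      refine setLIntegral_mono
        ((hgm.comp (measurable_const.sub (measurable_id.const_mul 2))).pow_const 2)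
        fun t ht => ?_
      have h := key (x - t) t ⟨le_of_lt ht.1, ht.2⟩
      have hxy : x - t - t = x - 2*t := by ring
      rw [hxy] at h
      exact pow_le_pow_left' h 2
    have step2 : ∫⁻ t in Set.Ioc (0:ℝ) T, gdef T f G (x - 2*t) ^ 2
        = ∫⁻ s in Set.Ioc (0:ℝ) T, gdef T f G ((x - 2*T) + 2*s) ^ 2 := by
      have hr := refl_lint T (fun s => gdef T f G ((x - 2*T) + 2*s) ^ 2)
        ((hgm.comp (measurable_const.add (measurable_id.const_mul 2))).pow_const 2)
      rw [← hr]
      refine setLIntegral_congr_fun measurableSet_Ioc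
        (fun t _ => ?_)
      congr 2
      ring
    refine le_trans (ENNReal.rpow_le_rpow (step1.trans_eq step2) (by norm_num)) ?_
    exact le_iSup (fun x => (∫⁻ s in Set.Ioc (0:ℝ) T, gdef T f G (x + 2*s) ^ 2) ^ (1/2:ℝ))
      (x - 2*T)
  exact ⟨ha, hb, key, keyD, fun t ht => by
    calc Dnorm T (fun x => u x t) + Xplus T u + DnormE T (gdef T f G)
        ≤ (Dnorm T f + Nplus T G) + (Dnorm T f + Nplus T G) + (Dnorm T f + Nplus T G) :=
          add_le_add (add_le_add (ha t ht) hb) keyD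
      _ = 3 * Dnorm T f + 3 * Nplus T G := by ring⟩
end

section
/- Let T > 0 and let v, v', u : ℝ × [0,T] → ℂ be measurable. Suppose p : ℝ → [0,∞) is measurable and |u(x,t)| ≤ p(x−t) for all (x,t) ∈ ℝ × [0,T]. Then ‖v v' u‖_{N₊(T)} ≤ ‖v‖_{X₋(T)} ‖v'‖_{X₋(T)} ‖p‖_{D(T)}, where v v' u denotes the pointwise product. Symmetrically, if u, u', v are measurable and q : ℝ → [0,∞) satisfies |v(x,t)| ≤ q(x+t) for all (x,t), then ‖u u' v‖_{N₋(T)} ≤ ‖u‖_{X₊(T)} ‖u'‖_{X₊(T)} ‖q‖_{D(T)}. -/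
open MeasureTheory Set

/-- `‖v‖_{X₋(T)} = sup_{x ∈ ℝ} (∫₀^T |v(x+t,t)|² dt)^{1/2}`. -/
noncomputable def Xminus (T : ℝ) (v : ℝ → ℝ → ℂ) : ENNReal :=
  ⨆ x : ℝ, (∫⁻ t in Set.Ioc (0:ℝ) T, (‖v (x + t) t‖₊ : ENNReal)^2) ^ (1/2 : ℝ)

/-- `‖F‖_{N₋(T)}`: the `D(T)` norm of `y ↦ ∫₀^T |F(y−s,s)| ds`. -/
noncomputable def Nminus (T : ℝ) (F : ℝ → ℝ → ℂ) : ENNReal :=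
  DnormE T (fun y => ∫⁻ s in Set.Ioc (0:ℝ) T, (‖F (y - s) s‖₊ : ENNReal))


lemma key_trilinear (T : ℝ) (L : ℝ → ℝ → ℝ) (hL : Measurable (Function.uncurry L))
    (a b c : ℝ → ℝ → ℂ) (ha : Measurable (Function.uncurry a))
    (hb : Measurable (Function.uncurry b))
    (p : ℝ → ENNReal) (hp : Measurable p)
    (hc : ∀ y : ℝ, ∀ s ∈ Set.Ioc (0:ℝ) T, (‖c (L y s) s‖₊ : ENNReal) ≤ p y) :
    (⨆ x : ℝ, (∫⁻ s in Set.Ioc (0:ℝ) T,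
        ((fun y => ∫⁻ r in Set.Ioc (0:ℝ) T,
          (‖a (L y r) r * b (L y r) r * c (L y r) r‖₊ : ENNReal)) (x + 2*s))^2) ^ (1/2 : ℝ))
      ≤ (⨆ x : ℝ, (∫⁻ t in Set.Ioc (0:ℝ) T, ((‖a (L x t) t‖₊ : ENNReal))^2) ^ (1/2 : ℝ))
        * (⨆ x : ℝ, (∫⁻ t in Set.Ioc (0:ℝ) T, ((‖b (L x t) t‖₊ : ENNReal))^2) ^ (1/2 : ℝ))
        * (⨆ x : ℝ, (∫⁻ s in Set.Ioc (0:ℝ) T, (p (x + 2*s))^2) ^ (1/2 : ℝ)) := by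
  set A := (⨆ x : ℝ, (∫⁻ t in Set.Ioc (0:ℝ) T, ((‖a (L x t) t‖₊ : ENNReal))^2) ^ (1/2 : ℝ)) with hA
  set B := (⨆ x : ℝ, (∫⁻ t in Set.Ioc (0:ℝ) T, ((‖b (L x t) t‖₊ : ENNReal))^2) ^ (1/2 : ℝ)) with hB
  -- measurability helpers
  have hmeas : ∀ y : ℝ, Measurable fun s : ℝ => (L y s, s) := fun y =>
    ((hL.comp (measurable_const.prodMk measurable_id)).prodMk measurable_id)
  have hma : ∀ y : ℝ, Measurable fun s : ℝ => (‖a (L y s) s‖₊ : ENNReal) := fun y =>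
    (ha.comp (hmeas y)).enorm
  have hmb : ∀ y : ℝ, Measurable fun s : ℝ => (‖b (L y s) s‖₊ : ENNReal) := fun y =>
    (hb.comp (hmeas y)).enorm
  -- pointwise bound
  have key : ∀ y : ℝ, (∫⁻ r in Set.Ioc (0:ℝ) T,
      (‖a (L y r) r * b (L y r) r * c (L y r) r‖₊ : ENNReal)) ≤ A * B * p y := by
    intro y
    have step1 : (∫⁻ r in Set.Ioc (0:ℝ) T,
        (‖a (L y r) r * b (L y r) r * c (L y r) r‖₊ : ENNReal))
        ≤ ∫⁻ r in Set.Ioc (0:ℝ) T,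
          (‖a (L y r) r‖₊ : ENNReal) * (‖b (L y r) r‖₊ : ENNReal) * p y := by
      refine setLIntegral_mono_ae ((((hma y).mul (hmb y)).mul_const _).aemeasurable) ?_
      filter_upwards with r hr
      calc (‖a (L y r) r * b (L y r) r * c (L y r) r‖₊ : ENNReal)
          = (‖a (L y r) r‖₊ : ENNReal) * (‖b (L y r) r‖₊ : ENNReal) * (‖c (L y r) r‖₊ : ENNReal) := by
            push_cast [nnnorm_mul]; ring
        _ ≤ _ := by gcongr; exact hc y r hr
    have step2 : (∫⁻ r in Set.Ioc (0:ℝ) T,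
        (‖a (L y r) r‖₊ : ENNReal) * (‖b (L y r) r‖₊ : ENNReal) * p y)
        = (∫⁻ r in Set.Ioc (0:ℝ) T,
            (‖a (L y r) r‖₊ : ENNReal) * (‖b (L y r) r‖₊ : ENNReal)) * p y :=
      lintegral_mul_const _ ((hma y).mul (hmb y))
    have holder : (∫⁻ r in Set.Ioc (0:ℝ) T,
        (‖a (L y r) r‖₊ : ENNReal) * (‖b (L y r) r‖₊ : ENNReal)) ≤ A * B := by
      have h2 : (2:ℝ).HolderConjugate 2 := Real.HolderConjugate.two_two
      have := ENNReal.lintegral_mul_le_Lp_mul_Lq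
        (volume.restrict (Set.Ioc (0:ℝ) T)) h2 (hma y).aemeasurable (hmb y).aemeasurable
      refine this.trans ?_
      gcongr
      · simp_rw [ENNReal.rpow_two]
        exact le_iSup (fun x => (∫⁻ t in Set.Ioc (0:ℝ) T,
          ((‖a (L x t) t‖₊ : ENNReal))^2) ^ (1/2 : ℝ)) y
      · simp_rw [ENNReal.rpow_two]
        exact le_iSup (fun x => (∫⁻ t in Set.Ioc (0:ℝ) T,
          ((‖b (L x t) t‖₊ : ENNReal))^2) ^ (1/2 : ℝ)) y
    calc _ ≤ _ := step1
      _ = _ := step2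
      _ ≤ A * B * p y := by gcongr
  -- conclude
  refine iSup_le fun x => ?_
  have hbound : (∫⁻ s in Set.Ioc (0:ℝ) T,
      ((fun y => ∫⁻ r in Set.Ioc (0:ℝ) T,
        (‖a (L y r) r * b (L y r) r * c (L y r) r‖₊ : ENNReal)) (x + 2*s))^2)
      ≤ (A*B)^2 * ∫⁻ s in Set.Ioc (0:ℝ) T, (p (x + 2*s))^2 := by
    have hpm : Measurable fun s : ℝ => (p (x + 2*s))^2 := by
      exact ((hp.comp (measurable_const.add (measurable_const.mul measurable_id))).pow_const 2)
    rw [← lintegral_const_mul _ hpm]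
    refine lintegral_mono fun s => ?_
    calc _ ≤ (A * B * p (x + 2*s))^2 := by gcongr; exact key _
      _ = (A*B)^2 * (p (x+2*s))^2 := by rw [mul_pow]
  calc _ ≤ ((A*B)^2 * ∫⁻ s in Set.Ioc (0:ℝ) T, (p (x + 2*s))^2) ^ (1/2:ℝ) := by gcongr
    _ = ((A*B)^2)^(1/2:ℝ) * (∫⁻ s in Set.Ioc (0:ℝ) T, (p (x + 2*s))^2) ^ (1/2:ℝ) :=
        ENNReal.mul_rpow_of_nonneg _ _ (by norm_num)
    _ ≤ A * B * (⨆ x : ℝ, (∫⁻ s in Set.Ioc (0:ℝ) T, (p (x + 2*s))^2) ^ (1/2 : ℝ)) := by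
        rw [← ENNReal.rpow_two, ← ENNReal.rpow_mul]
        norm_num
        gcongr
        exact le_iSup (fun x => (∫⁻ s in Set.Ioc (0:ℝ) T, (p (x + 2*s))^2) ^ (1/2 : ℝ)) x


/-- Trilinear (null form) estimates: if `|u(x,t)| ≤ p(x−t)` then
`‖v v' u‖_{N₊(T)} ≤ ‖v‖_{X₋(T)} ‖v'‖_{X₋(T)} ‖p‖_{D(T)}`, and symmetrically, if
`|v(x,t)| ≤ q(x+t)` then `‖u u' v‖_{N₋(T)} ≤ ‖u‖_{X₊(T)} ‖u'‖_{X₊(T)} ‖q‖_{D(T)}`. -/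
theorem trilinear_estimates (T : ℝ) (hT : 0 < T) (u u' v v' : ℝ → ℝ → ℂ)
    (hu : Measurable (Function.uncurry u)) (hu' : Measurable (Function.uncurry u'))
    (hv : Measurable (Function.uncurry v)) (hv' : Measurable (Function.uncurry v'))
    (p q : ℝ → ENNReal) (hp : Measurable p) (hq : Measurable q)
    (hup : ∀ x : ℝ, ∀ t ∈ Set.Icc (0:ℝ) T, (‖u x t‖₊ : ENNReal) ≤ p (x - t))
    (hvq : ∀ x : ℝ, ∀ t ∈ Set.Icc (0:ℝ) T, (‖v x t‖₊ : ENNReal) ≤ q (x + t)) :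
    Nplus T (fun x t => v x t * v' x t * u x t)
        ≤ Xminus T v * Xminus T v' * DnormE T p ∧
    Nminus T (fun x t => u x t * u' x t * v x t)
        ≤ Xplus T u * Xplus T u' * DnormE T q := by
  constructor
  · refine key_trilinear T (fun y s => y + s) (by fun_prop) v v' u hv hv' p hp ?_
    intro y s hs
    simpa using hup (y + s) s (Set.Ioc_subset_Icc_self hs)
  · refine key_trilinear T (fun y s => y - s) (by fun_prop) u u' v hu hu' q hq ?_
    intro y s hs
    simpa using hvq (y - s) s (Set.Ioc_subset_Icc_self hs)
end

section
/- Let T > 0 and let v, v' : ℝ × [0,T] → ℂ be measurable. Then ‖v v'‖_{N₊(T)} ≤ √T ‖v‖_{X₋(T)} ‖v'‖_{X₋(T)}, where v v' denotes the pointwise product. Symmetrically, for measurable u, u' : ℝ × [0,T] → ℂ, ‖u u'‖_{N₋(T)} ≤ √T ‖u‖_{X₊(T)} ‖u'‖_{X₊(T)}. -/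
open MeasureTheory Set

private lemma sq_rpow_half (A : ENNReal) : (A ^ 2) ^ (1/2 : ℝ) = A := by
  rw [← ENNReal.rpow_natCast A 2, ← ENNReal.rpow_mul]
  norm_num

private lemma rpow_two_eq_sq (f : ℝ → ENNReal) :
    (fun a => f a ^ (2 : ℝ)) = fun a => f a ^ 2 := by
  funext a; rw [← ENNReal.rpow_natCast (f a) 2]; norm_num

private lemma DnormE_le_of_bound (T : ℝ) (hT : 0 < T) (g : ℝ → ENNReal) (A : ENNReal)
    (h : ∀ y, g y ≤ A) : DnormE T g ≤ ENNReal.ofReal (Real.sqrt T) * A := by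
  refine iSup_le fun x => ?_
  calc (∫⁻ s in Set.Ioc (0:ℝ) T, (g (x + 2*s))^2) ^ (1/2 : ℝ)
      ≤ (∫⁻ _ in Set.Ioc (0:ℝ) T, A^2) ^ (1/2 : ℝ) := by
        refine ENNReal.rpow_le_rpow (lintegral_mono fun s => ?_) (by norm_num)
        exact pow_le_pow_left' (h _) 2
    _ = (A^2 * ENNReal.ofReal T) ^ (1/2 : ℝ) := by
        rw [setLIntegral_const, Real.volume_Ioc, sub_zero]
    _ = ENNReal.ofReal (Real.sqrt T) * A := by
        rw [ENNReal.mul_rpow_of_nonneg _ _ (by norm_num : (0:ℝ) ≤ 1/2),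
          sq_rpow_half, ENNReal.ofReal_rpow_of_pos hT, ← Real.sqrt_eq_rpow, mul_comm]

/-- Bilinear (null form) estimates:
`‖v v'‖_{N₊(T)} ≤ √T ‖v‖_{X₋(T)} ‖v'‖_{X₋(T)}` and
`‖u u'‖_{N₋(T)} ≤ √T ‖u‖_{X₊(T)} ‖u'‖_{X₊(T)}`. -/
theorem bilinear_estimates (T : ℝ) (hT : 0 < T) (u u' v v' : ℝ → ℝ → ℂ)
    (hu : Measurable (Function.uncurry u)) (hu' : Measurable (Function.uncurry u'))
    (hv : Measurable (Function.uncurry v)) (hv' : Measurable (Function.uncurry v')) :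
    Nplus T (fun x t => v x t * v' x t)
        ≤ ENNReal.ofReal (Real.sqrt T) * Xminus T v * Xminus T v' ∧
    Nminus T (fun x t => u x t * u' x t)
        ≤ ENNReal.ofReal (Real.sqrt T) * Xplus T u * Xplus T u' := by
  constructor
  · rw [mul_assoc]
    refine DnormE_le_of_bound T hT _ _ fun y => ?_
    have hm : Measurable fun s : ℝ => ((‖v (y + s) s‖₊ : ENNReal)) :=
      (hv.comp ((measurable_const.add measurable_id).prodMk measurable_id)).enorm
    have hm' : Measurable fun s : ℝ => ((‖v' (y + s) s‖₊ : ENNReal)) :=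
      (hv'.comp ((measurable_const.add measurable_id).prodMk measurable_id)).enorm
    calc (∫⁻ s in Set.Ioc (0:ℝ) T, (‖v (y + s) s * v' (y + s) s‖₊ : ENNReal))
        = ∫⁻ s in Set.Ioc (0:ℝ) T,
            ((fun s => ((‖v (y + s) s‖₊ : ENNReal))) * fun s => ((‖v' (y + s) s‖₊ : ENNReal))) s := by
          simp [nnnorm_mul, ENNReal.coe_mul]
      _ ≤ (∫⁻ s in Set.Ioc (0:ℝ) T, ((‖v (y + s) s‖₊ : ENNReal)) ^ (2:ℝ)) ^ (1/2 : ℝ) *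
          (∫⁻ s in Set.Ioc (0:ℝ) T, ((‖v' (y + s) s‖₊ : ENNReal)) ^ (2:ℝ)) ^ (1/2 : ℝ) :=
          ENNReal.lintegral_mul_le_Lp_mul_Lq _ Real.HolderConjugate.two_two
            hm.aemeasurable hm'.aemeasurable
      _ ≤ Xminus T v * Xminus T v' := by
          rw [rpow_two_eq_sq, rpow_two_eq_sq]
          exact mul_le_mul'
            (le_iSup (fun x => (∫⁻ t in Set.Ioc (0:ℝ) T, ((‖v (x + t) t‖₊ : ENNReal))^2) ^ (1/2:ℝ)) y)
            (le_iSup (fun x => (∫⁻ t in Set.Ioc (0:ℝ) T, ((‖v' (x + t) t‖₊ : ENNReal))^2) ^ (1/2:ℝ)) y)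
  · rw [mul_assoc]
    refine DnormE_le_of_bound T hT _ _ fun y => ?_
    have hm : Measurable fun s : ℝ => ((‖u (y - s) s‖₊ : ENNReal)) :=
      (hu.comp ((measurable_const.sub measurable_id).prodMk measurable_id)).enorm
    have hm' : Measurable fun s : ℝ => ((‖u' (y - s) s‖₊ : ENNReal)) :=
      (hu'.comp ((measurable_const.sub measurable_id).prodMk measurable_id)).enorm
    calc (∫⁻ s in Set.Ioc (0:ℝ) T, (‖u (y - s) s * u' (y - s) s‖₊ : ENNReal))
        = ∫⁻ s in Set.Ioc (0:ℝ) T,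
            ((fun s => ((‖u (y - s) s‖₊ : ENNReal))) * fun s => ((‖u' (y - s) s‖₊ : ENNReal))) s := by
          simp [nnnorm_mul, ENNReal.coe_mul]
      _ ≤ (∫⁻ s in Set.Ioc (0:ℝ) T, ((‖u (y - s) s‖₊ : ENNReal)) ^ (2:ℝ)) ^ (1/2 : ℝ) *
          (∫⁻ s in Set.Ioc (0:ℝ) T, ((‖u' (y - s) s‖₊ : ENNReal)) ^ (2:ℝ)) ^ (1/2 : ℝ) :=
          ENNReal.lintegral_mul_le_Lp_mul_Lq _ Real.HolderConjugate.two_two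
            hm.aemeasurable hm'.aemeasurable
      _ ≤ Xplus T u * Xplus T u' := by
          rw [rpow_two_eq_sq, rpow_two_eq_sq]
          exact mul_le_mul'
            (le_iSup (fun x => (∫⁻ t in Set.Ioc (0:ℝ) T, ((‖u (x - t) t‖₊ : ENNReal))^2) ^ (1/2:ℝ)) y)
            (le_iSup (fun x => (∫⁻ t in Set.Ioc (0:ℝ) T, ((‖u' (x - t) t‖₊ : ENNReal))^2) ^ (1/2:ℝ)) y)
end

section
/- Let T > 0 and let u, v : ℝ × [0,T] → ℂ be measurable with sup_{0 ≤ s ≤ T} ‖u(·,s)‖_{D(T)} < ∞ and sup_{0 ≤ s ≤ T} ‖v(·,s)‖_{D(T)} < ∞. Then for every (x,t) ∈ ℝ × [0,T], |W(uv)(x,t)| ≤ 2 ∫₀^T ‖u(·,s)‖_{D(T)} ‖v(·,s)‖_{D(T)} ds, where uv denotes the pointwise product. -/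
open MeasureTheory Set
open scoped ENNReal

/-- The wave-operator integral `W F(x,t) = ∫₀^t ∫_{x−(t−s)}^{x+(t−s)} F(y,s) dy ds`. -/
noncomputable def W (F : ℝ → ℝ → ℂ) (x t : ℝ) : ℂ :=
  ∫ s in (0:ℝ)..t, ∫ y in (x - (t - s))..(x + (t - s)), F y s

private lemma cov_aux (g : ℝ → ℝ≥0∞) (hg : Measurable g) (a T : ℝ) :
    ∫⁻ y in Set.Ioc a (a + 2*T), g y = 2 * ∫⁻ s in Set.Ioc (0:ℝ) T, g (a + 2*s) := by
  have hφ : Measurable fun s : ℝ => a + 2*s := (measurable_const_mul 2).const_add a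
  have hmap : Measure.map (fun s : ℝ => a + 2*s) volume
      = (ENNReal.ofReal |(2:ℝ)⁻¹|) • volume := by
    have h1 : (fun s : ℝ => a + 2*s) = (fun y : ℝ => a + y) ∘ (fun s : ℝ => 2*s) := rfl
    rw [h1, ← Measure.map_map (measurable_const_add a) (measurable_const_mul 2),
      show (fun s : ℝ => 2*s) = (fun s : ℝ => (2:ℝ) * s) from rfl,
      Real.map_volume_mul_left (two_ne_zero), Measure.map_smul,
      map_add_left_eq_self volume a]
  have hpre : (fun s : ℝ => a + 2*s) ⁻¹' (Set.Ioc a (a + 2*T)) = Set.Ioc (0:ℝ) T := by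
    ext s
    simp only [Set.mem_preimage, Set.mem_Ioc]
    constructor
    · rintro ⟨h1, h2⟩; constructor <;> nlinarith
    · rintro ⟨h1, h2⟩; constructor <;> nlinarith
  have htwo : (2:ℝ≥0∞) * ENNReal.ofReal |(2:ℝ)⁻¹| = 1 := by
    rw [abs_of_pos (by norm_num : (0:ℝ) < 2⁻¹), ENNReal.ofReal_inv_of_pos two_pos]
    norm_num
    rw [ENNReal.mul_inv_cancel (by norm_num) (by norm_num)]
  calc ∫⁻ y in Set.Ioc a (a + 2*T), g y
      = 2 * ∫⁻ y in Set.Ioc a (a + 2*T), g y ∂((ENNReal.ofReal |(2:ℝ)⁻¹|) • volume) := by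
        rw [Measure.restrict_smul, lintegral_smul_measure, smul_eq_mul, ← mul_assoc, htwo, one_mul]
    _ = 2 * ∫⁻ s in Set.Ioc (0:ℝ) T, g (a + 2*s) := by
        rw [← hmap, setLIntegral_map measurableSet_Ioc hg hφ, hpre]

private lemma sq_bound (T : ℝ) (f : ℝ → ℂ) (hf : Measurable f) {a b : ℝ}
    (hbT : b ≤ a + 2*T) :
    ∫⁻ y in Set.Ioc a b, ((‖f y‖₊ : ℝ≥0∞))^2 ≤ 2 * (Dnorm T f)^2 := by
  have h1 : ∫⁻ y in Set.Ioc a b, ((‖f y‖₊:ℝ≥0∞))^2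
      ≤ ∫⁻ y in Set.Ioc a (a+2*T), ((‖f y‖₊:ℝ≥0∞))^2 :=
    lintegral_mono_set (Set.Ioc_subset_Ioc_right hbT)
  have h2 := cov_aux (fun y => ((‖f y‖₊:ℝ≥0∞))^2) (hf.enorm.pow_const 2) a T
  have h4 : (∫⁻ s in Set.Ioc (0:ℝ) T, ((‖f (a+2*s)‖₊:ℝ≥0∞))^2) ^ (1/2:ℝ) ≤ Dnorm T f :=
    le_iSup (fun x => (∫⁻ s in Set.Ioc (0:ℝ) T, ((‖f (x+2*s)‖₊:ℝ≥0∞))^2) ^ (1/2:ℝ)) a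
  have h3 : (∫⁻ s in Set.Ioc (0:ℝ) T, ((‖f (a+2*s)‖₊:ℝ≥0∞))^2) ≤ (Dnorm T f)^2 := by
    have hsq : ∀ y : ℝ≥0∞, (y ^ (1/2:ℝ)) ^ 2 = y := by
      intro y
      rw [← ENNReal.rpow_natCast (y ^ (1/2:ℝ)) 2, ← ENNReal.rpow_mul]
      norm_num
    calc (∫⁻ s in Set.Ioc (0:ℝ) T, ((‖f (a+2*s)‖₊:ℝ≥0∞))^2)
        = (((∫⁻ s in Set.Ioc (0:ℝ) T, ((‖f (a+2*s)‖₊:ℝ≥0∞))^2) ^ (1/2:ℝ)))^2 :=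
          (hsq _).symm
      _ ≤ (Dnorm T f)^2 := pow_le_pow_left' h4 2
  calc ∫⁻ y in Set.Ioc a b, ((‖f y‖₊:ℝ≥0∞))^2 ≤ _ := h1
    _ = 2 * ∫⁻ s in Set.Ioc (0:ℝ) T, ((‖f (a+2*s)‖₊:ℝ≥0∞))^2 := h2
    _ ≤ 2 * (Dnorm T f)^2 := by exact mul_le_mul_right h3 2

private lemma sqrt_two_mul_sq (D : ℝ≥0∞) :
    (2 * D^2) ^ (1/2:ℝ) = (2:ℝ≥0∞) ^ (1/2:ℝ) * D := by
  rw [ENNReal.mul_rpow_of_nonneg _ _ (by norm_num : (0:ℝ) ≤ 1/2),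
    ← ENNReal.rpow_natCast D 2, ← ENNReal.rpow_mul]
  norm_num

private lemma inner_bound (T : ℝ) (f g : ℝ → ℂ) (hf : Measurable f) (hg : Measurable g)
    {a b : ℝ} (hbT : b ≤ a + 2*T) :
    ∫⁻ y in Set.Ioc a b, (‖f y * g y‖₊ : ℝ≥0∞) ≤ 2 * (Dnorm T f * Dnorm T g) := by
  have hconj : Real.HolderConjugate 2 2 := Real.HolderConjugate.two_two
  have hCS := ENNReal.lintegral_mul_le_Lp_mul_Lq (volume.restrict (Set.Ioc a b)) hconj
    hf.enorm.aemeasurable hg.enorm.aemeasurable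
  have heq : ∀ y, (‖f y * g y‖₊ : ℝ≥0∞)
      = ((fun y => (‖f y‖₊:ℝ≥0∞)) * fun y => (‖g y‖₊:ℝ≥0∞)) y := by
    intro y
    simp [nnnorm_mul, ENNReal.coe_mul]
  calc ∫⁻ y in Set.Ioc a b, (‖f y * g y‖₊ : ℝ≥0∞)
      = ∫⁻ y in Set.Ioc a b,
          ((fun y => (‖f y‖₊:ℝ≥0∞)) * fun y => (‖g y‖₊:ℝ≥0∞)) y := by
        simp only [heq]
    _ ≤ (∫⁻ y in Set.Ioc a b, (‖f y‖₊:ℝ≥0∞) ^ (2:ℝ)) ^ (1/2:ℝ)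
        * (∫⁻ y in Set.Ioc a b, (‖g y‖₊:ℝ≥0∞) ^ (2:ℝ)) ^ (1/2:ℝ) := hCS
    _ ≤ (2 * (Dnorm T f)^2) ^ (1/2:ℝ) * (2 * (Dnorm T g)^2) ^ (1/2:ℝ) := by
        apply mul_le_mul'
        · apply ENNReal.rpow_le_rpow _ (by norm_num : (0:ℝ) ≤ 1/2)
          simpa [ENNReal.rpow_two] using sq_bound T f hf hbT
        · apply ENNReal.rpow_le_rpow _ (by norm_num : (0:ℝ) ≤ 1/2)
          simpa [ENNReal.rpow_two] using sq_bound T g hg hbT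
    _ = 2 * (Dnorm T f * Dnorm T g) := by
        rw [sqrt_two_mul_sq, sqrt_two_mul_sq]
        rw [show ((2:ℝ≥0∞) ^ (1/2:ℝ) * Dnorm T f) * ((2:ℝ≥0∞) ^ (1/2:ℝ) * Dnorm T g)
            = ((2:ℝ≥0∞) ^ (1/2:ℝ) * (2:ℝ≥0∞) ^ (1/2:ℝ)) * (Dnorm T f * Dnorm T g) by ring]
        congr 1
        rw [← ENNReal.rpow_add _ _ (by norm_num) (by norm_num)]
        norm_num

/-- For `u, v` with slices bounded in `D(T)`, one has
`|W(uv)(x,t)| ≤ 2 ∫₀^T ‖u(·,s)‖_{D(T)} ‖v(·,s)‖_{D(T)} ds` on `ℝ × [0,T]`. -/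
theorem W_bound (T : ℝ) (hT : 0 < T) (u v : ℝ → ℝ → ℂ)
    (hu : Measurable (Function.uncurry u)) (hv : Measurable (Function.uncurry v))
    (hub : (⨆ s ∈ Set.Icc (0:ℝ) T, Dnorm T (fun x => u x s)) < ⊤)
    (hvb : (⨆ s ∈ Set.Icc (0:ℝ) T, Dnorm T (fun x => v x s)) < ⊤) :
    ∀ x : ℝ, ∀ t ∈ Set.Icc (0:ℝ) T,
      (‖W (fun y s => u y s * v y s) x t‖₊ : ENNReal)
        ≤ 2 * ∫⁻ s in Set.Ioc (0:ℝ) T, Dnorm T (fun x' => u x' s) * Dnorm T (fun x' => v x' s) := by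
  intro x t ht
  obtain ⟨ht0, htT⟩ := ht
  have hus : ∀ s : ℝ, Measurable fun y => u y s := fun s =>
    hu.comp (measurable_id.prodMk measurable_const)
  have hvs : ∀ s : ℝ, Measurable fun y => v y s := fun s =>
    hv.comp (measurable_id.prodMk measurable_const)
  have hW : W (fun y s => u y s * v y s) x t
      = ∫ s in Set.Ioc (0:ℝ) t, ∫ y in (x - (t - s))..(x + (t - s)), u y s * v y s := by
    rw [W, intervalIntegral.integral_of_le ht0]
  rw [hW]
  calc (‖∫ s in Set.Ioc (0:ℝ) t,
        ∫ y in (x - (t - s))..(x + (t - s)), u y s * v y s‖₊ : ℝ≥0∞)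
      ≤ ∫⁻ s in Set.Ioc (0:ℝ) t,
          (‖∫ y in (x - (t - s))..(x + (t - s)), u y s * v y s‖₊ : ℝ≥0∞) :=
        enorm_integral_le_lintegral_enorm _
    _ ≤ ∫⁻ s in Set.Ioc (0:ℝ) t,
          2 * (Dnorm T (fun x' => u x' s) * Dnorm T (fun x' => v x' s)) := by
        apply lintegral_mono_ae
        rw [ae_restrict_iff' measurableSet_Ioc]
        filter_upwards with s hs
        obtain ⟨hs0, hst⟩ := hs
        have hle : x - (t - s) ≤ x + (t - s) := by linarith
        have hbT : x + (t - s) ≤ (x - (t - s)) + 2*T := by linarith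
        calc (‖∫ y in (x - (t - s))..(x + (t - s)), u y s * v y s‖₊ : ℝ≥0∞)
            = (‖∫ y in Set.Ioc (x - (t - s)) (x + (t - s)), u y s * v y s‖₊ : ℝ≥0∞) := by
              rw [intervalIntegral.integral_of_le hle]
          _ ≤ ∫⁻ y in Set.Ioc (x - (t - s)) (x + (t - s)), (‖u y s * v y s‖₊ : ℝ≥0∞) :=
              enorm_integral_le_lintegral_enorm _
          _ ≤ 2 * (Dnorm T (fun x' => u x' s) * Dnorm T (fun x' => v x' s)) :=
              inner_bound T _ _ (hus s) (hvs s) hbT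
    _ ≤ ∫⁻ s in Set.Ioc (0:ℝ) T,
          2 * (Dnorm T (fun x' => u x' s) * Dnorm T (fun x' => v x' s)) :=
        lintegral_mono_set (Set.Ioc_subset_Ioc_right htT)
    _ = 2 * ∫⁻ s in Set.Ioc (0:ℝ) T,
          Dnorm T (fun x' => u x' s) * Dnorm T (fun x' => v x' s) :=
        lintegral_const_mul' 2 _ (by norm_num)
end
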